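/- Let k ≥ 50 and let γ be the dominant root of x^k - 2x^{k-1} - ... - x - 1, g_k(z) = (z-1)/((k+1)z² - 3kz + k - 1), and φ = (1+√5)/2. Then |g_k(γ) - g_k(φ²)| < 4k/φ^k. -/

import Mathlib

noncomputable def φ : ℝ := (1 + Real.sqrt 5) / 2

def IsDomRoot (k : ℕ) (γ : ℝ) : Prop :=
  1 < γ ∧ γ ^ k = 2 * γ ^ (k - 1) + ∑ i ∈ Finset.range (k - 1), γ ^ i

noncomputable def g (k : ℕ) (z : ℝ) : ℝ :=
  (z - 1) / (((k : ℝ) + 1) * z ^ 2 - 3 * (k : ℝ) * z + ((k : ℝ) - 1))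

set_option maxHeartbeats 1000000 in
theorem g_gamma_close_to_g_phi_sq (k : ℕ) (hk : 50 ≤ k) (γ : ℝ) (hγ : IsDomRoot k γ) :
    |g k γ - g k (φ ^ 2)| < 4 * (k : ℝ) / φ ^ k := by
  obtain ⟨n, rfl⟩ : ∃ n, k = n + 1 := ⟨k - 1, by omega⟩
  have hn : 49 ≤ n := by omega
  obtain ⟨hγ1, heq⟩ := hγ
  simp only [Nat.add_sub_cancel] at heq
  -- basic sqrt 5 facts
  have hs : Real.sqrt 5 ^ 2 = 5 := Real.sq_sqrt (by norm_num)
  have hs0 : 0 < Real.sqrt 5 := Real.sqrt_pos.mpr (by norm_num)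
  have hs22 : 2.2 < Real.sqrt 5 := by nlinarith
  have hs23 : Real.sqrt 5 < 2.3 := by nlinarith
  have hφ2 : φ ^ 2 = φ + 1 := by unfold φ; nlinarith
  have hφl : 1.6 < φ := by unfold φ; nlinarith
  have hφu : φ < 1.7 := by unfold φ; nlinarith
  have hφ4 : (φ ^ 2) ^ 2 - 3 * φ ^ 2 + 1 = 0 := by linear_combination (φ ^ 2 + φ - 1) * hφ2
  -- key equation : γ^n * (γ² - 3γ + 1) = -1
  have hgs := geom_sum_mul γ n
  have hS : (∑ i ∈ Finset.range n, γ ^ i) = γ ^ (n + 1) - 2 * γ ^ n := by linarith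
  rw [hS] at hgs
  rw [pow_succ] at hgs
  have key : γ ^ n * (γ ^ 2 - 3 * γ + 1) = -1 := by linear_combination hgs
  have tpos : (0:ℝ) < γ ^ n := pow_pos (by linarith) n
  -- γ > 2
  have hSpos : 0 < ∑ i ∈ Finset.range n, γ ^ i :=
    Finset.sum_pos (fun i _ => pow_pos (by linarith) i) (Finset.nonempty_range_iff.mpr (by omega))
  have hγ2 : 2 < γ := by
    by_contra h
    push_neg at h
    have h1 : γ ^ (n + 1) ≤ 2 * γ ^ n := by
      rw [pow_succ]
      nlinarith
    linarith
  have hγsq : 4 < γ ^ 2 := by nlinarith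
  -- k < γ^n
  have hku : ((n:ℝ) + 1) < γ ^ n := by
    have h2n : (n:ℕ) + 1 ≤ 2 ^ n := Nat.lt_two_pow_self (n := n)
    have h2n' : ((n:ℝ) + 1) ≤ 2 ^ n := by exact_mod_cast h2n
    have h2g : (2:ℝ) ^ n < γ ^ n := pow_lt_pow_left₀ hγ2 (by norm_num) (by omega)
    linarith
  -- γ < φ²
  have hneg : γ ^ 2 - 3 * γ + 1 < 0 := by
    by_contra h
    push_neg at h
    nlinarith [mul_nonneg tpos.le h]
  have hγφ : γ < φ ^ 2 := by
    by_contra h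
    push_neg at h
    nlinarith [mul_nonneg (sub_nonneg.mpr h) (show (0:ℝ) ≤ γ + φ ^ 2 - 3 by nlinarith)]
  -- t(φ²-γ)(γ+φ²-3) = 1
  have htu : γ ^ n * ((φ ^ 2 - γ) * (γ + φ ^ 2 - 3)) = 1 := by
    linear_combination (γ ^ n) * hφ4 - key
  have htu0 : 0 < γ ^ n * (φ ^ 2 - γ) := mul_pos tpos (by linarith)
  have hw : 1 < γ + φ ^ 2 - 3 := by nlinarith
  have htu1 : γ ^ n * (φ ^ 2 - γ) < 1 := by nlinarith [htu, htu0, hw]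
  have hn' : (49:ℝ) ≤ (n:ℝ) := by exact_mod_cast hn
  -- denominators
  set Dg : ℝ := (((n:ℝ) + 1) + 1) * γ ^ 2 - 3 * ((n:ℝ) + 1) * γ + (((n:ℝ) + 1) - 1) with hDgdef
  set Df : ℝ := (((n:ℝ) + 1) + 1) * (φ ^ 2) ^ 2 - 3 * ((n:ℝ) + 1) * (φ ^ 2) + (((n:ℝ) + 1) - 1) with hDfdef
  have hgγ : g (n + 1) γ = (γ - 1) / Dg := by
    unfold g; rw [hDgdef]; push_cast; ring
  have hgφ : g (n + 1) (φ ^ 2) = (φ ^ 2 - 1) / Df := by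
    unfold g; rw [hDfdef]; push_cast; ring
  have h1 : γ ^ n * Dg = γ ^ n * (γ ^ 2 - 1) - ((n:ℝ) + 1) := by
    rw [hDgdef]; linear_combination ((n:ℝ) + 1) * key
  have hDg2 : 2 < Dg := by
    by_contra h
    push_neg at h
    nlinarith [h1, hku, mul_le_mul_of_nonneg_left h tpos.le,
      mul_pos tpos (show (0:ℝ) < γ ^ 2 - 3 by nlinarith)]
  have hDf : Df = (φ ^ 2) ^ 2 - 1 := by
    rw [hDfdef]; linear_combination ((n:ℝ) + 1) * hφ4
  have hDf5 : 5 < Df := by rw [hDf]; nlinarith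
  have hDg0 : Dg ≠ 0 := by linarith
  have hDf0 : Df ≠ 0 := by linarith
  -- numerator identity and bounds
  have hNid : γ ^ n * ((γ - 1) * Df - (φ ^ 2 - 1) * Dg)
      = (φ ^ 2 - 1) * ((γ - 1) * (γ ^ n * (φ ^ 2 - γ)) + ((n:ℝ) + 1)) := by
    linear_combination ((γ - 1) * γ ^ n) * hDf - (φ ^ 2 - 1) * h1
  have hxpos : 0 < (γ - 1) * (γ ^ n * (φ ^ 2 - γ)) := mul_pos (by linarith) htu0
  have hNpos : 0 < (γ - 1) * Df - (φ ^ 2 - 1) * Dg := by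
    by_contra h
    push_neg at h
    nlinarith [hNid, hxpos, mul_nonpos_of_nonneg_of_nonpos tpos.le h]
  have hN2 : γ ^ n * ((γ - 1) * Df - (φ ^ 2 - 1) * Dg) < 2 * (((n:ℝ) + 1) + 2) := by
    nlinarith [hNid, htu0, htu1,
      mul_nonneg (show (0:ℝ) ≤ γ - 1 by linarith) (show (0:ℝ) ≤ 1 - γ ^ n * (φ ^ 2 - γ) by linarith),
      hxpos]
  have hdiff : g (n + 1) γ - g (n + 1) (φ ^ 2)
      = ((γ - 1) * Df - (φ ^ 2 - 1) * Dg) / (Dg * Df) := by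
    rw [hgγ, hgφ]
    field_simp
  have hDD : 0 < Dg * Df := by positivity
  have hφpos : (0:ℝ) < φ := by linarith
  have hφk : φ ^ (n + 1) < 2 * γ ^ n := by
    have h1' : φ ^ n ≤ γ ^ n := pow_le_pow_left₀ (by linarith) (by linarith) n
    have hφn : (0:ℝ) < φ ^ n := pow_pos hφpos n
    calc φ ^ (n + 1) = φ * φ ^ n := by rw [pow_succ]; ring
      _ < 2 * φ ^ n := mul_lt_mul_of_pos_right (by linarith) hφn
      _ ≤ 2 * γ ^ n := by linarith
  have hφkpos : (0:ℝ) < φ ^ (n + 1) := pow_pos hφpos _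
  rw [hdiff, abs_of_pos (div_pos hNpos hDD)]
  rw [div_lt_div_iff₀ hDD hφkpos]
  push_cast
  have e1 : ((γ - 1) * Df - (φ ^ 2 - 1) * Dg) * φ ^ (n + 1)
      < ((γ - 1) * Df - (φ ^ 2 - 1) * Dg) * (2 * γ ^ n) :=
    mul_lt_mul_of_pos_left hφk hNpos
  have h10 : 10 < Dg * Df := by
    have hh : 2 * Df < Dg * Df := mul_lt_mul_of_pos_right hDg2 (by linarith)
    linarith
  have hKpos : (0:ℝ) < 4 * ((n:ℝ) + 1) := by linarith
  have c2 : ((γ - 1) * Df - (φ ^ 2 - 1) * Dg) * (2 * γ ^ n)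
      = 2 * (γ ^ n * ((γ - 1) * Df - (φ ^ 2 - 1) * Dg)) := by ring
  have c3 : 4 * ((n:ℝ) + 1) * 10 < 4 * ((n:ℝ) + 1) * (Dg * Df) :=
    mul_lt_mul_of_pos_left h10 hKpos
  linarith [e1, c2, hN2, c3]
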